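/- arXiv:1507.07352 — 2 statements merged into one kernel-verified Lean document; each statement's English description precedes it below -/
import Mathlib

section
/- Let h be a 6-dimensional Lie algebra with a basis {e₁,…,e₆} such that (ω, ψ₊) with ω = e^{12}+e^{34}+e^{56}, ψ₊ = e^{135}−e^{146}−e^{236}−e^{245}, ψ₋ = e^{136}+e^{145}+e^{235}−e^{246} is half-flat (d(ω∧ω) = 0 and dψ₊ = 0), and let D be a derivation of h lying in sp(6,ℝ) with respect to ω in this basis. Then on g = h ⊕_D ℝξ, the 4-form (1/2)ω∧ω + ψ₊∧η is closed, where η is the dual of ξ; i.e., the G₂-form φ = ω∧η − ψ₋ is coclosed. -/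
open Finset BigOperators

/-- Kronecker delta as a real number. -/
def kd {n : ℕ} (a i : Fin n) : ℝ := if a = i then 1 else 0

/-- The 2-form `e^a ∧ e^b` evaluated on basis vectors `e_i, e_j`. -/
def pairF {n : ℕ} (a b i j : Fin n) : ℝ := kd a i * kd b j - kd a j * kd b i

/-- The 3-form `e^a ∧ e^b ∧ e^c` evaluated on basis vectors. -/
def tripF {n : ℕ} (a b c i j k : Fin n) : ℝ :=
  Matrix.det !![kd a i, kd a j, kd a k; kd b i, kd b j, kd b k; kd c i, kd c j, kd c k]

/-- The 4-form `e^a ∧ e^b ∧ e^c ∧ e^d` evaluated on basis vectors. -/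
def quadF {n : ℕ} (a b c d i j k l : Fin n) : ℝ :=
  Matrix.det !![kd a i, kd a j, kd a k, kd a l;
                kd b i, kd b j, kd b k, kd b l;
                kd c i, kd c j, kd c k, kd c l;
                kd d i, kd d j, kd d k, kd d l]

/-- Chevalley–Eilenberg differential of a 2-form, on basis vectors.
`br i a b` is the coefficient of `e_i` in `[e_a, e_b]`. -/
def d2 {n : ℕ} (br : Fin n → Fin n → Fin n → ℝ) (α : Fin n → Fin n → ℝ)
    (a b c : Fin n) : ℝ :=
  -(∑ m, br m a b * α m c) + (∑ m, br m a c * α m b) - (∑ m, br m b c * α m a)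

/-- Chevalley–Eilenberg differential of a 3-form, on basis vectors. -/
def d3 {n : ℕ} (br : Fin n → Fin n → Fin n → ℝ) (α : Fin n → Fin n → Fin n → ℝ)
    (a b c d : Fin n) : ℝ :=
  -(∑ m, br m a b * α m c d) + (∑ m, br m a c * α m b d) - (∑ m, br m a d * α m b c)
  - (∑ m, br m b c * α m a d) + (∑ m, br m b d * α m a c) - (∑ m, br m c d * α m a b)

/-- Chevalley–Eilenberg differential of a 4-form, on basis vectors. -/
def d4 {n : ℕ} (br : Fin n → Fin n → Fin n → ℝ)
    (α : Fin n → Fin n → Fin n → Fin n → ℝ) (a b c d e : Fin n) : ℝ :=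
  -(∑ m, br m a b * α m c d e) + (∑ m, br m a c * α m b d e) - (∑ m, br m a d * α m b c e)
  + (∑ m, br m a e * α m b c d) - (∑ m, br m b c * α m a d e) + (∑ m, br m b d * α m a c e)
  - (∑ m, br m b e * α m a c d) - (∑ m, br m c d * α m a b e) + (∑ m, br m c e * α m a b d)
  - (∑ m, br m d e * α m a b c)

/-- Wedge product of two 2-forms, evaluated on basis vectors. -/
def w22 {n : ℕ} (α β : Fin n → Fin n → ℝ) (i j k l : Fin n) : ℝ :=
  α i j * β k l - α i k * β j l + α i l * β j k
  + α j k * β i l - α j l * β i k + α k l * β i j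

/-- Wedge product of a 2-form and a 1-form, evaluated on basis vectors. -/
def w21 {n : ℕ} (α : Fin n → Fin n → ℝ) (β : Fin n → ℝ) (i j k : Fin n) : ℝ :=
  α i j * β k - α i k * β j + α j k * β i

/-- Wedge product of a 3-form and a 1-form, evaluated on basis vectors. -/
def w31 {n : ℕ} (α : Fin n → Fin n → Fin n → ℝ) (β : Fin n → ℝ) (i j k l : Fin n) : ℝ :=
  α i j k * β l - α i j l * β k + α i k l * β j - α j k l * β i

/-- `ω = e^{12} + e^{34} + e^{56}` (0-indexed). -/
def omega6 : Fin 6 → Fin 6 → ℝ := fun i j => pairF 0 1 i j + pairF 2 3 i j + pairF 4 5 i j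

/-- `ψ₊ = e^{135} − e^{146} − e^{236} − e^{245}` (0-indexed). -/
def psi6 : Fin 6 → Fin 6 → Fin 6 → ℝ := fun i j k =>
  tripF 0 2 4 i j k - tripF 0 3 5 i j k - tripF 1 2 5 i j k - tripF 1 3 4 i j k

/-- `ω` viewed on a 7-dimensional space (indices 0..5). -/
def omega7 : Fin 7 → Fin 7 → ℝ := fun i j => pairF 0 1 i j + pairF 2 3 i j + pairF 4 5 i j

/-- `ψ₊` viewed on a 7-dimensional space. -/
def psi7 : Fin 7 → Fin 7 → Fin 7 → ℝ := fun i j k =>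
  tripF 0 2 4 i j k - tripF 0 3 5 i j k - tripF 1 2 5 i j k - tripF 1 3 4 i j k

/-- `η = e^7`, the 1-form dual to the extra direction. -/
def eta7 : Fin 7 → ℝ := kd 6

/-- The real 6×6 representation of a complex 3×3 matrix: each entry `a+bi`
becomes the 2×2 block `[[a, b], [−b, a]]`. -/
def realRep (A : Matrix (Fin 3) (Fin 3) ℂ) : Matrix (Fin 6) (Fin 6) ℝ :=
  Matrix.of fun i j =>
    let p : Fin 3 := ⟨(i : ℕ) / 2, by have := i.isLt; omega⟩
    let q : Fin 3 := ⟨(j : ℕ) / 2, by have := j.isLt; omega⟩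
    if (i : ℕ) % 2 = 0 then
      (if (j : ℕ) % 2 = 0 then (A p q).re else (A p q).im)
    else
      (if (j : ℕ) % 2 = 0 then -(A p q).im else (A p q).re)

/-- Structure constants of the semidirect sum `g = h ⊕_D ℝξ`, where `f` are the
structure constants of `h` ( `f i a b` = coefficient of `e_i` in `[e_a,e_b]` ),
`ξ = e₇` and `[ξ, U] = D U`. -/
def brg (f : Fin 6 → Fin 6 → Fin 6 → ℝ) (D : Matrix (Fin 6) (Fin 6) ℝ) :
    Fin 7 → Fin 7 → Fin 7 → ℝ := fun i a b =>
  if hi : (i : ℕ) < 6 then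
    if ha : (a : ℕ) < 6 then
      if hb : (b : ℕ) < 6 then f ⟨i, hi⟩ ⟨a, ha⟩ ⟨b, hb⟩
      else -(D ⟨i, hi⟩ ⟨a, ha⟩)
    else
      if hb : (b : ℕ) < 6 then D ⟨i, hi⟩ ⟨b, hb⟩ else 0
  else 0

section Aux

/-- The coclosure 4-form. -/
noncomputable def sig : Fin 7 → Fin 7 → Fin 7 → Fin 7 → ℝ := fun i j k l =>
  (1 / 2) * w22 omega7 omega7 i j k l + w31 psi7 eta7 i j k l

lemma kd_cast (a i : Fin 6) : kd a.castSucc i.castSucc = kd a i := by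
  simp [kd, Fin.castSucc_inj]

lemma kd_cs_last (a : Fin 6) : kd a.castSucc (Fin.last 6) = 0 := by
  rw [kd, if_neg (Fin.castSucc_lt_last a).ne]

lemma pairF_cast (a b i j : Fin 6) :
    pairF a.castSucc b.castSucc i.castSucc j.castSucc = pairF a b i j := by
  simp [pairF, kd_cast]

lemma tripF_cast (a b c i j k : Fin 6) :
    tripF a.castSucc b.castSucc c.castSucc i.castSucc j.castSucc k.castSucc
      = tripF a b c i j k := by
  simp [tripF, Matrix.det_fin_three, kd_cast]

lemma omega7_cast (i j : Fin 6) : omega7 i.castSucc j.castSucc = omega6 i j := by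
  show pairF 0 1 _ _ + pairF 2 3 _ _ + pairF 4 5 _ _ = _
  rw [show (0:Fin 7) = (0:Fin 6).castSucc from by decide,
      show (1:Fin 7) = (1:Fin 6).castSucc from by decide,
      show (2:Fin 7) = (2:Fin 6).castSucc from by decide,
      show (3:Fin 7) = (3:Fin 6).castSucc from by decide,
      show (4:Fin 7) = (4:Fin 6).castSucc from by decide,
      show (5:Fin 7) = (5:Fin 6).castSucc from by decide,
      pairF_cast, pairF_cast, pairF_cast]
  rfl

lemma psi7_cast (i j k : Fin 6) :
    psi7 i.castSucc j.castSucc k.castSucc = psi6 i j k := by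
  show tripF 0 2 4 _ _ _ - tripF 0 3 5 _ _ _ - tripF 1 2 5 _ _ _ - tripF 1 3 4 _ _ _ = _
  rw [show (0:Fin 7) = (0:Fin 6).castSucc from by decide,
      show (1:Fin 7) = (1:Fin 6).castSucc from by decide,
      show (2:Fin 7) = (2:Fin 6).castSucc from by decide,
      show (3:Fin 7) = (3:Fin 6).castSucc from by decide,
      show (4:Fin 7) = (4:Fin 6).castSucc from by decide,
      show (5:Fin 7) = (5:Fin 6).castSucc from by decide,
      tripF_cast, tripF_cast, tripF_cast, tripF_cast]
  rfl

lemma omega7_last_r (x : Fin 7) : omega7 x (Fin.last 6) = 0 := by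
  have k0 : kd (0:Fin 7) (Fin.last 6) = 0 := by rw [kd, if_neg (by decide)]
  have k1 : kd (1:Fin 7) (Fin.last 6) = 0 := by rw [kd, if_neg (by decide)]
  have k2 : kd (2:Fin 7) (Fin.last 6) = 0 := by rw [kd, if_neg (by decide)]
  have k3 : kd (3:Fin 7) (Fin.last 6) = 0 := by rw [kd, if_neg (by decide)]
  have k4 : kd (4:Fin 7) (Fin.last 6) = 0 := by rw [kd, if_neg (by decide)]
  have k5 : kd (5:Fin 7) (Fin.last 6) = 0 := by rw [kd, if_neg (by decide)]
  simp only [omega7, pairF, k0, k1, k2, k3, k4, k5]; ring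

lemma eta_cs (i : Fin 6) : eta7 i.castSucc = 0 := by
  show kd 6 i.castSucc = 0
  rw [show (6:Fin 7) = Fin.last 6 from by decide, kd,
    if_neg (Fin.castSucc_lt_last i).ne']

lemma eta_last : eta7 (Fin.last 6) = 1 := by
  show kd 6 (Fin.last 6) = 1
  rw [show (6:Fin 7) = Fin.last 6 from by decide, kd, if_pos rfl]

lemma omega7_anti (i j : Fin 7) : omega7 i j = -omega7 j i := by
  simp only [omega7, pairF]; ring

lemma omega6_anti (i j : Fin 6) : omega6 i j = -omega6 j i := by
  simp only [omega6, pairF]; ring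

lemma tripF_swap12 {n : ℕ} (a b c i j k : Fin n) : tripF a b c j i k = -tripF a b c i j k := by
  simp [tripF, Matrix.det_fin_three]; ring

lemma tripF_swap23 {n : ℕ} (a b c i j k : Fin n) : tripF a b c i k j = -tripF a b c i j k := by
  simp [tripF, Matrix.det_fin_three]; ring

lemma psi7_swap12 (i j k : Fin 7) : psi7 j i k = -psi7 i j k := by
  show tripF 0 2 4 j i k - tripF 0 3 5 j i k - tripF 1 2 5 j i k - tripF 1 3 4 j i k = _
  rw [tripF_swap12 0 2 4 i j k, tripF_swap12 0 3 5 i j k, tripF_swap12 1 2 5 i j k,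
      tripF_swap12 1 3 4 i j k]
  show _ = -(tripF 0 2 4 i j k - tripF 0 3 5 i j k - tripF 1 2 5 i j k - tripF 1 3 4 i j k)
  ring

lemma psi7_swap23 (i j k : Fin 7) : psi7 i k j = -psi7 i j k := by
  show tripF 0 2 4 i k j - tripF 0 3 5 i k j - tripF 1 2 5 i k j - tripF 1 3 4 i k j = _
  rw [tripF_swap23 0 2 4 i j k, tripF_swap23 0 3 5 i j k, tripF_swap23 1 2 5 i j k,
      tripF_swap23 1 3 4 i j k]
  show _ = -(tripF 0 2 4 i j k - tripF 0 3 5 i j k - tripF 1 2 5 i j k - tripF 1 3 4 i j k)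
  ring

lemma sig_swap23 (i j k l : Fin 7) : sig i k j l = -sig i j k l := by
  simp only [sig, w22, w31]
  linear_combination omega7 i l * omega7_anti j k + eta7 l * psi7_swap23 i j k
    - eta7 i * psi7_swap12 j k l

lemma sig_swap34 (i j k l : Fin 7) : sig i j l k = -sig i j k l := by
  simp only [sig, w22, w31]
  linear_combination omega7 i j * omega7_anti k l + eta7 j * psi7_swap23 i k l
    - eta7 i * psi7_swap23 j k l

lemma sig_cc (m x y z : Fin 6) :
    sig m.castSucc x.castSucc y.castSucc z.castSucc
      = 1 / 2 * w22 omega6 omega6 m x y z := by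
  simp only [sig, w22, w31, omega7_cast, eta_cs, mul_zero, add_zero, sub_zero, zero_add]

lemma sig_l4 (m x y : Fin 6) :
    sig m.castSucc x.castSucc y.castSucc (Fin.last 6) = psi6 m x y := by
  simp only [sig, w22, w31, omega7_last_r, eta_cs, eta_last, psi7_cast, mul_zero, zero_mul,
    mul_one, add_zero, sub_zero, zero_add, zero_sub, neg_zero, mul_eq_zero]

end Aux
section Aux2

lemma brg_cast (f : Fin 6 → Fin 6 → Fin 6 → ℝ) (D : Matrix (Fin 6) (Fin 6) ℝ)
    (m a b : Fin 6) : brg f D m.castSucc a.castSucc b.castSucc = f m a b := by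
  simp [brg]

lemma brg_D (f : Fin 6 → Fin 6 → Fin 6 → ℝ) (D : Matrix (Fin 6) (Fin 6) ℝ)
    (m a : Fin 6) : brg f D m.castSucc a.castSucc (Fin.last 6) = -(D m a) := by
  simp [brg]

lemma brg_last_left (f : Fin 6 → Fin 6 → Fin 6 → ℝ) (D : Matrix (Fin 6) (Fin 6) ℝ)
    (a b : Fin 7) : brg f D (Fin.last 6) a b = 0 := by
  simp [brg]

lemma brg_anti (f : Fin 6 → Fin 6 → Fin 6 → ℝ) (D : Matrix (Fin 6) (Fin 6) ℝ)
    (hanti : ∀ i a b, f i a b = -f i b a) (i a b : Fin 7) :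
    brg f D i a b = -brg f D i b a := by
  unfold brg
  split_ifs <;> first | exact hanti _ _ _ | ring

lemma sum7 (g : Fin 7 → ℝ) (h : g (Fin.last 6) = 0) :
    ∑ m : Fin 7, g m = ∑ m : Fin 6, g m.castSucc := by
  rw [Fin.sum_univ_castSucc, h, add_zero]

section Swap

variable {n : ℕ} (br : Fin n → Fin n → Fin n → ℝ) (α : Fin n → Fin n → Fin n → Fin n → ℝ)

lemma sumswap_br (hbr : ∀ m x y, br m x y = -br m y x) (x y z u v : Fin n) :
    (∑ m, br m x y * α m z u v) = -∑ m, br m y x * α m z u v := by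
  rw [← Finset.sum_neg_distrib]
  exact Finset.sum_congr rfl fun m _ => by linear_combination α m z u v * hbr m x y

lemma sumswap_23 (hα : ∀ m x y z, α m y x z = -α m x y z) (x y z u v : Fin n) :
    (∑ m, br m x y * α m z u v) = -∑ m, br m x y * α m u z v := by
  rw [← Finset.sum_neg_distrib]
  exact Finset.sum_congr rfl fun m _ => by linear_combination br m x y * hα m z u v

lemma sumswap_34 (hα : ∀ m x y z, α m x z y = -α m x y z) (x y z u v : Fin n) :
    (∑ m, br m x y * α m z u v) = -∑ m, br m x y * α m z v u := by
  rw [← Finset.sum_neg_distrib]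
  exact Finset.sum_congr rfl fun m _ => by linear_combination br m x y * hα m z u v

variable (hbr : ∀ m x y, br m x y = -br m y x)
  (hα23 : ∀ m x y z, α m y x z = -α m x y z)
  (hα34 : ∀ m x y z, α m x z y = -α m x y z)

include hbr hα23 hα34

lemma d4_s1 (a b c d e : Fin n) : d4 br α b a c d e = -d4 br α a b c d e := by
  simp only [d4]
  rw [sumswap_br br α hbr b a c d e, sumswap_23 br α hα23 c d b a e,
      sumswap_23 br α hα23 c e b a d, sumswap_23 br α hα23 d e b a c]
  ring

lemma d4_s2 (a b c d e : Fin n) : d4 br α a c b d e = -d4 br α a b c d e := by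
  simp only [d4]
  rw [sumswap_23 br α hα23 a d c b e, sumswap_23 br α hα23 a e c b d,
      sumswap_br br α hbr c b a d e, sumswap_34 br α hα34 d e a c b]
  ring

lemma d4_s3 (a b c d e : Fin n) : d4 br α a b d c e = -d4 br α a b c d e := by
  simp only [d4]
  rw [sumswap_23 br α hα23 a b d c e, sumswap_34 br α hα34 a e b d c,
      sumswap_34 br α hα34 b e a d c, sumswap_br br α hbr d c a b e]
  ring

lemma d4_s4 (a b c d e : Fin n) : d4 br α a b c e d = -d4 br α a b c d e := by
  simp only [d4]
  rw [sumswap_34 br α hα34 a b c e d, sumswap_34 br α hα34 a c b e d,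
      sumswap_34 br α hα34 b c a e d, sumswap_br br α hbr e d a b c]
  ring

end Swap

end Aux2
set_option maxHeartbeats 2000000 in
/-- If `h` is a 6-dimensional Lie algebra (structure constants `f`) whose
SU(3)-structure `(ω, ψ₊)` is half-flat (`d(ω∧ω) = 0`, `dψ₊ = 0`), and `D` is a
derivation of `h` lying in `sp(6,ℝ)` with respect to `ω`, then on
`g = h ⊕_D ℝξ` the 4-form `(1/2) ω∧ω + ψ₊∧η` is closed, i.e. the
G₂-form `φ = ω∧η − ψ₋` is coclosed. -/
theorem stmt_10 (f : Fin 6 → Fin 6 → Fin 6 → ℝ)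
    (hanti : ∀ i a b, f i a b = -f i b a)
    (hjac : ∀ i a b c : Fin 6,
      (∑ m, f i m c * f m a b) + (∑ m, f i m a * f m b c) + (∑ m, f i m b * f m c a) = 0)
    (homega2 : ∀ a b c d e : Fin 6, d4 f (w22 omega6 omega6) a b c d e = 0)
    (hpsi : ∀ a b c d : Fin 6, d3 f psi6 a b c d = 0)
    (D : Matrix (Fin 6) (Fin 6) ℝ)
    (hder : ∀ i a b : Fin 6,
      (∑ m, D i m * f m a b) = (∑ m, f i m b * D m a) + (∑ m, f i a m * D m b))
    (hsp : ∀ x y : Fin 6 → ℝ,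
      (∑ i, ∑ j, omega6 i j * (D.mulVec x) i * y j)
        + (∑ i, ∑ j, omega6 i j * x i * (D.mulVec y) j) = 0) :
    ∀ a b c d e : Fin 7,
      d4 (brg f D)
        (fun i j k l => (1 / 2) * w22 omega7 omega7 i j k l + w31 psi7 eta7 i j k l)
        a b c d e = 0 := by
  have hlam : (fun i j k l => (1 / 2) * w22 omega7 omega7 i j k l + w31 psi7 eta7 i j k l)
      = sig := rfl
  rw [hlam]
  have hbr' := brg_anti f D hanti
  have s1 := d4_s1 (brg f D) sig hbr' sig_swap23 sig_swap34
  have s2 := d4_s2 (brg f D) sig hbr' sig_swap23 sig_swap34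
  have s3 := d4_s3 (brg f D) sig hbr' sig_swap23 sig_swap34
  have s4 := d4_s4 (brg f D) sig hbr' sig_swap23 sig_swap34
  have hQ : ∀ x y : Fin 6, (∑ m, omega6 m y * D m x) = ∑ m, omega6 m x * D m y := by
    intro x y
    have h := hsp (Pi.single x 1) (Pi.single y 1)
    simp only [Matrix.mulVec_single, Pi.single_apply, mul_one, mul_ite, mul_zero,
      Finset.sum_ite_irrel, Finset.sum_const_zero, Finset.sum_ite_eq, Finset.sum_ite_eq',
      Finset.mem_univ, if_true, ite_mul, zero_mul] at h
    simp only [MulOpposite.op_one, one_smul, Pi.smul_apply, Matrix.col_apply] at h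
    have flip : (∑ j, omega6 x j * D j y) = -∑ j, omega6 j x * D j y := by
      rw [← Finset.sum_neg_distrib]
      exact Finset.sum_congr rfl fun j _ => by rw [omega6_anti]; ring
    linarith [h, flip]
  have conv1 : ∀ x y z u v : Fin 6,
      (∑ m : Fin 7, brg f D m x.castSucc y.castSucc * sig m z.castSucc u.castSucc v.castSucc)
        = 1 / 2 * ∑ m : Fin 6, f m x y * w22 omega6 omega6 m z u v := by
    intro x y z u v
    rw [sum7 _ (by rw [brg_last_left]; ring), Finset.mul_sum]
    exact Finset.sum_congr rfl fun m _ => by rw [brg_cast, sig_cc]; ring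
  have conv2 : ∀ x y z u : Fin 6,
      (∑ m : Fin 7, brg f D m x.castSucc y.castSucc * sig m z.castSucc u.castSucc (Fin.last 6))
        = ∑ m : Fin 6, f m x y * psi6 m z u := by
    intro x y z u
    rw [sum7 _ (by rw [brg_last_left]; ring)]
    exact Finset.sum_congr rfl fun m _ => by rw [brg_cast, sig_l4]
  have conv3 : ∀ x z u v : Fin 6,
      (∑ m : Fin 7, brg f D m x.castSucc (Fin.last 6) * sig m z.castSucc u.castSucc v.castSucc)
        = -(1 / 2) * ∑ m : Fin 6, D m x * w22 omega6 omega6 m z u v := by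
    intro x z u v
    rw [sum7 _ (by rw [brg_last_left]; ring), Finset.mul_sum]
    exact Finset.sum_congr rfl fun m _ => by rw [brg_D, sig_cc]; ring
  have lemW : ∀ x y z u : Fin 6,
      (∑ m : Fin 6, D m x * w22 omega6 omega6 m y z u)
        = 2 * omega6 z u * (∑ m, omega6 m y * D m x) - 2 * omega6 y u * (∑ m, omega6 m z * D m x)
          + 2 * omega6 y z * (∑ m, omega6 m u * D m x) := by
    intro x y z u
    rw [show (2 * omega6 z u * (∑ m, omega6 m y * D m x) - 2 * omega6 y u * (∑ m, omega6 m z * D m x)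
          + 2 * omega6 y z * (∑ m, omega6 m u * D m x))
        = ∑ m, (2 * omega6 z u * (omega6 m y * D m x) - 2 * omega6 y u * (omega6 m z * D m x)
          + 2 * omega6 y z * (omega6 m u * D m x)) from by
      simp only [mul_assoc, Finset.mul_sum, Finset.sum_add_distrib, Finset.sum_sub_distrib]]
    exact Finset.sum_congr rfl fun m _ => by simp only [w22]; ring
  have hA : ∀ a b c d e : Fin 6,
      d4 (brg f D) sig a.castSucc b.castSucc c.castSucc d.castSucc e.castSucc = 0 := by
    intro a b c d e
    have h := homega2 a b c d e
    simp only [d4] at h ⊢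
    rw [conv1 a b c d e, conv1 a c b d e, conv1 a d b c e, conv1 a e b c d, conv1 b c a d e,
        conv1 b d a c e, conv1 b e a c d, conv1 c d a b e, conv1 c e a b d, conv1 d e a b c]
    linarith [h]
  have hB : ∀ a b c d : Fin 6,
      d4 (brg f D) sig a.castSucc b.castSucc c.castSucc d.castSucc (Fin.last 6) = 0 := by
    intro a b c d
    have h := hpsi a b c d
    simp only [d3] at h
    simp only [d4]
    rw [conv2 a b c d, conv2 a c b d, conv2 a d b c, conv3 a b c d, conv2 b c a d,
        conv2 b d a c, conv3 b a c d, conv2 c d a b, conv3 c a b d, conv3 d a b c]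
    rw [lemW a b c d, lemW b a c d, lemW c a b d, lemW d a b c]
    linear_combination h - omega6 c d * hQ a b + omega6 b d * hQ a c - omega6 b c * hQ a d
      - omega6 a d * hQ b c + omega6 a c * hQ b d - omega6 a b * hQ c d
  have q4 : ∀ a b c e : Fin 6,
      d4 (brg f D) sig a.castSucc b.castSucc c.castSucc (Fin.last 6) e.castSucc = 0 := by
    intro a b c e; rw [s4, hB, neg_zero]
  have q3 : ∀ a b d e : Fin 6,
      d4 (brg f D) sig a.castSucc b.castSucc (Fin.last 6) d.castSucc e.castSucc = 0 := by
    intro a b d e; rw [s3, q4, neg_zero]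
  have q2 : ∀ a c d e : Fin 6,
      d4 (brg f D) sig a.castSucc (Fin.last 6) c.castSucc d.castSucc e.castSucc = 0 := by
    intro a c d e; rw [s2, q3, neg_zero]
  have q1 : ∀ b c d e : Fin 6,
      d4 (brg f D) sig (Fin.last 6) b.castSucc c.castSucc d.castSucc e.castSucc = 0 := by
    intro b c d e; rw [s1, q2, neg_zero]
  have h45 : ∀ x y z : Fin 7,
      d4 (brg f D) sig x y z (Fin.last 6) (Fin.last 6) = 0 := by
    intro x y z; have := s4 x y z (Fin.last 6) (Fin.last 6); linarith
  have h35 : ∀ x y z : Fin 7,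
      d4 (brg f D) sig x y (Fin.last 6) z (Fin.last 6) = 0 := by
    intro x y z; rw [s3, h45, neg_zero]
  have h34 : ∀ x y z : Fin 7,
      d4 (brg f D) sig x y (Fin.last 6) (Fin.last 6) z = 0 := by
    intro x y z; rw [s4, h35, neg_zero]
  have h25 : ∀ x y z : Fin 7,
      d4 (brg f D) sig x (Fin.last 6) y z (Fin.last 6) = 0 := by
    intro x y z; rw [s2, h35, neg_zero]
  have h24 : ∀ x y z : Fin 7,
      d4 (brg f D) sig x (Fin.last 6) y (Fin.last 6) z = 0 := by
    intro x y z; rw [s4, h25, neg_zero]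
  have h23 : ∀ x y z : Fin 7,
      d4 (brg f D) sig x (Fin.last 6) (Fin.last 6) y z = 0 := by
    intro x y z; rw [s3, h24, neg_zero]
  have h15 : ∀ x y z : Fin 7,
      d4 (brg f D) sig (Fin.last 6) x y z (Fin.last 6) = 0 := by
    intro x y z; rw [s1, h25, neg_zero]
  have h14 : ∀ x y z : Fin 7,
      d4 (brg f D) sig (Fin.last 6) x y (Fin.last 6) z = 0 := by
    intro x y z; rw [s4, h15, neg_zero]
  have h13 : ∀ x y z : Fin 7,
      d4 (brg f D) sig (Fin.last 6) x (Fin.last 6) y z = 0 := by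
    intro x y z; rw [s3, h14, neg_zero]
  have h12 : ∀ x y z : Fin 7,
      d4 (brg f D) sig (Fin.last 6) (Fin.last 6) x y z = 0 := by
    intro x y z; rw [s2, h13, neg_zero]
  intro a b c d e
  obtain ⟨a', rfl⟩ | rfl := Fin.eq_castSucc_or_eq_last a
  · obtain ⟨b', rfl⟩ | rfl := Fin.eq_castSucc_or_eq_last b
    · obtain ⟨c', rfl⟩ | rfl := Fin.eq_castSucc_or_eq_last c
      · obtain ⟨d', rfl⟩ | rfl := Fin.eq_castSucc_or_eq_last d
        · obtain ⟨e', rfl⟩ | rfl := Fin.eq_castSucc_or_eq_last e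
          · exact hA a' b' c' d' e'
          · exact hB a' b' c' d'
        · obtain ⟨e', rfl⟩ | rfl := Fin.eq_castSucc_or_eq_last e
          · exact q4 a' b' c' e'
          · exact h45 a'.castSucc b'.castSucc c'.castSucc
      · obtain ⟨d', rfl⟩ | rfl := Fin.eq_castSucc_or_eq_last d
        · obtain ⟨e', rfl⟩ | rfl := Fin.eq_castSucc_or_eq_last e
          · exact q3 a' b' d' e'
          · exact h35 a'.castSucc b'.castSucc d'.castSucc
        · obtain ⟨e', rfl⟩ | rfl := Fin.eq_castSucc_or_eq_last e
          · exact h34 a'.castSucc b'.castSucc e'.castSucc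
          · exact h34 a'.castSucc b'.castSucc (Fin.last 6)
    · obtain ⟨c', rfl⟩ | rfl := Fin.eq_castSucc_or_eq_last c
      · obtain ⟨d', rfl⟩ | rfl := Fin.eq_castSucc_or_eq_last d
        · obtain ⟨e', rfl⟩ | rfl := Fin.eq_castSucc_or_eq_last e
          · exact q2 a' c' d' e'
          · exact h25 a'.castSucc c'.castSucc d'.castSucc
        · obtain ⟨e', rfl⟩ | rfl := Fin.eq_castSucc_or_eq_last e
          · exact h24 a'.castSucc c'.castSucc e'.castSucc
          · exact h24 a'.castSucc c'.castSucc (Fin.last 6)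
      · obtain ⟨d', rfl⟩ | rfl := Fin.eq_castSucc_or_eq_last d
        · obtain ⟨e', rfl⟩ | rfl := Fin.eq_castSucc_or_eq_last e
          · exact h23 a'.castSucc d'.castSucc e'.castSucc
          · exact h23 a'.castSucc d'.castSucc (Fin.last 6)
        · obtain ⟨e', rfl⟩ | rfl := Fin.eq_castSucc_or_eq_last e
          · exact h23 a'.castSucc (Fin.last 6) e'.castSucc
          · exact h23 a'.castSucc (Fin.last 6) (Fin.last 6)
  · obtain ⟨b', rfl⟩ | rfl := Fin.eq_castSucc_or_eq_last b
    · obtain ⟨c', rfl⟩ | rfl := Fin.eq_castSucc_or_eq_last c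
      · obtain ⟨d', rfl⟩ | rfl := Fin.eq_castSucc_or_eq_last d
        · obtain ⟨e', rfl⟩ | rfl := Fin.eq_castSucc_or_eq_last e
          · exact q1 b' c' d' e'
          · exact h15 b'.castSucc c'.castSucc d'.castSucc
        · obtain ⟨e', rfl⟩ | rfl := Fin.eq_castSucc_or_eq_last e
          · exact h14 b'.castSucc c'.castSucc e'.castSucc
          · exact h14 b'.castSucc c'.castSucc (Fin.last 6)
      · obtain ⟨d', rfl⟩ | rfl := Fin.eq_castSucc_or_eq_last d
        · obtain ⟨e', rfl⟩ | rfl := Fin.eq_castSucc_or_eq_last e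
          · exact h13 b'.castSucc d'.castSucc e'.castSucc
          · exact h13 b'.castSucc d'.castSucc (Fin.last 6)
        · obtain ⟨e', rfl⟩ | rfl := Fin.eq_castSucc_or_eq_last e
          · exact h13 b'.castSucc (Fin.last 6) e'.castSucc
          · exact h13 b'.castSucc (Fin.last 6) (Fin.last 6)
    · obtain ⟨c', rfl⟩ | rfl := Fin.eq_castSucc_or_eq_last c
      · obtain ⟨d', rfl⟩ | rfl := Fin.eq_castSucc_or_eq_last d
        · obtain ⟨e', rfl⟩ | rfl := Fin.eq_castSucc_or_eq_last e
          · exact h12 c'.castSucc d'.castSucc e'.castSucc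
          · exact h12 c'.castSucc d'.castSucc (Fin.last 6)
        · obtain ⟨e', rfl⟩ | rfl := Fin.eq_castSucc_or_eq_last e
          · exact h12 c'.castSucc (Fin.last 6) e'.castSucc
          · exact h12 c'.castSucc (Fin.last 6) (Fin.last 6)
      · obtain ⟨d', rfl⟩ | rfl := Fin.eq_castSucc_or_eq_last d
        · obtain ⟨e', rfl⟩ | rfl := Fin.eq_castSucc_or_eq_last e
          · exact h12 (Fin.last 6) d'.castSucc e'.castSucc
          · exact h12 (Fin.last 6) d'.castSucc (Fin.last 6)
        · obtain ⟨e', rfl⟩ | rfl := Fin.eq_castSucc_or_eq_last e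
          · exact h12 (Fin.last 6) (Fin.last 6) e'.castSucc
          · exact h12 (Fin.last 6) (Fin.last 6) (Fin.last 6)
end

section
/- For every a ∈ ℝ, the 7-dimensional Lie algebra with structure equations de¹ = −e^{15}+e^{36}−a e^{37}, de² = e^{46}+e^{25}−a e^{47}, de³ = −e^{16}−e^{35}+a e^{17}, de⁴ = e^{45}−e^{26}−a e^{27}, de⁵ = de⁶ = de⁷ = 0 satisfies d² = 0, and the 3-form φ = e^{127}+e^{347}+e^{567}+e^{135}−e^{146}−e^{236}−e^{245} is closed on it. -/
open Finset BigOperators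

/-- Structure constants of `g_{6,118}^{0,−1,−1} ⊕_D ℝe₇` for the parameter `a`. -/
def bb16 (a : ℝ) : Fin 7 → Fin 7 → Fin 7 → ℝ := fun i x y =>
  if i = 0 ∧ x = 0 ∧ y = 4 then 1
  else if i = 0 ∧ x = 2 ∧ y = 5 then -1
  else if i = 0 ∧ x = 2 ∧ y = 6 then a
  else if i = 1 ∧ x = 3 ∧ y = 5 then -1
  else if i = 1 ∧ x = 1 ∧ y = 4 then -1
  else if i = 1 ∧ x = 3 ∧ y = 6 then a
  else if i = 2 ∧ x = 0 ∧ y = 5 then 1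
  else if i = 2 ∧ x = 2 ∧ y = 4 then 1
  else if i = 2 ∧ x = 0 ∧ y = 6 then -a
  else if i = 3 ∧ x = 3 ∧ y = 4 then -1
  else if i = 3 ∧ x = 1 ∧ y = 5 then 1
  else if i = 3 ∧ x = 1 ∧ y = 6 then -a
  else 0

def br16 (a : ℝ) : Fin 7 → Fin 7 → Fin 7 → ℝ := fun i x y => bb16 a i x y - bb16 a i y x

def phi16 : Fin 7 → Fin 7 → Fin 7 → ℝ := fun i j k =>
  tripF 0 1 6 i j k + tripF 2 3 6 i j k + tripF 4 5 6 i j k + psi7 i j k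

/-! ### Auxiliary integer-valued machinery -/

def kdZ (a i : Fin 7) : ℤ := if a = i then 1 else 0

def tripZ (a b c i j k : Fin 7) : ℤ :=
  kdZ a i * kdZ b j * kdZ c k - kdZ a i * kdZ b k * kdZ c j
  - kdZ a j * kdZ b i * kdZ c k + kdZ a j * kdZ b k * kdZ c i
  + kdZ a k * kdZ b i * kdZ c j - kdZ a k * kdZ b j * kdZ c i

def phiZ : Fin 7 → Fin 7 → Fin 7 → ℤ := fun i j k =>
  tripZ 0 1 6 i j k + tripZ 2 3 6 i j k + tripZ 4 5 6 i j k
  + (tripZ 0 2 4 i j k - tripZ 0 3 5 i j k - tripZ 1 2 5 i j k - tripZ 1 3 4 i j k)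

def z0 : Fin 7 → Fin 7 → Fin 7 → ℤ := fun i x y =>
  if i = 0 ∧ x = 0 ∧ y = 4 then 1
  else if i = 0 ∧ x = 2 ∧ y = 5 then -1
  else if i = 0 ∧ x = 2 ∧ y = 6 then 0
  else if i = 1 ∧ x = 3 ∧ y = 5 then -1
  else if i = 1 ∧ x = 1 ∧ y = 4 then -1
  else if i = 1 ∧ x = 3 ∧ y = 6 then 0
  else if i = 2 ∧ x = 0 ∧ y = 5 then 1
  else if i = 2 ∧ x = 2 ∧ y = 4 then 1
  else if i = 2 ∧ x = 0 ∧ y = 6 then 0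
  else if i = 3 ∧ x = 3 ∧ y = 4 then -1
  else if i = 3 ∧ x = 1 ∧ y = 5 then 1
  else if i = 3 ∧ x = 1 ∧ y = 6 then 0
  else 0

def z1 : Fin 7 → Fin 7 → Fin 7 → ℤ := fun i x y =>
  if i = 0 ∧ x = 0 ∧ y = 4 then 0
  else if i = 0 ∧ x = 2 ∧ y = 5 then 0
  else if i = 0 ∧ x = 2 ∧ y = 6 then 1
  else if i = 1 ∧ x = 3 ∧ y = 5 then 0
  else if i = 1 ∧ x = 1 ∧ y = 4 then 0
  else if i = 1 ∧ x = 3 ∧ y = 6 then 1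
  else if i = 2 ∧ x = 0 ∧ y = 5 then 0
  else if i = 2 ∧ x = 2 ∧ y = 4 then 0
  else if i = 2 ∧ x = 0 ∧ y = 6 then -1
  else if i = 3 ∧ x = 3 ∧ y = 4 then 0
  else if i = 3 ∧ x = 1 ∧ y = 5 then 0
  else if i = 3 ∧ x = 1 ∧ y = 6 then -1
  else 0

def c0 : Fin 7 → Fin 7 → Fin 7 → ℤ := fun i x y => z0 i x y - z0 i y x
def c1 : Fin 7 → Fin 7 → Fin 7 → ℤ := fun i x y => z1 i x y - z1 i y x

def sum7_s16 (f : Fin 7 → ℤ) : ℤ := f 0 + f 1 + f 2 + f 3 + f 4 + f 5 + f 6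

def F2 (p q : Fin 7 → Fin 7 → Fin 7 → ℤ) (i x y z : Fin 7) : ℤ :=
  sum7_s16 (fun m => p m x y * q i m z) - sum7_s16 (fun m => p m x z * q i m y)
  + sum7_s16 (fun m => p m y z * q i m x)

def F3 (p : Fin 7 → Fin 7 → Fin 7 → ℤ) (φ : Fin 7 → Fin 7 → Fin 7 → ℤ)
    (a b c d : Fin 7) : ℤ :=
  -(sum7_s16 fun m => p m a b * φ m c d) + (sum7_s16 fun m => p m a c * φ m b d)
  - (sum7_s16 fun m => p m a d * φ m b c) - (sum7_s16 fun m => p m b c * φ m a d)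
  + (sum7_s16 fun m => p m b d * φ m a c) - (sum7_s16 fun m => p m c d * φ m a b)

lemma hbb (a : ℝ) (i x y : Fin 7) :
    bb16 a i x y = (z0 i x y : ℝ) + a * (z1 i x y : ℝ) := by
  by_cases h1 : i = 0 ∧ x = 0 ∧ y = 4
  · obtain ⟨rfl, rfl, rfl⟩ := h1; simp (config := { decide := true }) [bb16, z0, z1]
  by_cases h2 : i = 0 ∧ x = 2 ∧ y = 5
  · obtain ⟨rfl, rfl, rfl⟩ := h2; simp (config := { decide := true }) [bb16, z0, z1]
  by_cases h3 : i = 0 ∧ x = 2 ∧ y = 6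
  · obtain ⟨rfl, rfl, rfl⟩ := h3; simp (config := { decide := true }) [bb16, z0, z1]
  by_cases h4 : i = 1 ∧ x = 3 ∧ y = 5
  · obtain ⟨rfl, rfl, rfl⟩ := h4; simp (config := { decide := true }) [bb16, z0, z1]
  by_cases h5 : i = 1 ∧ x = 1 ∧ y = 4
  · obtain ⟨rfl, rfl, rfl⟩ := h5; simp (config := { decide := true }) [bb16, z0, z1]
  by_cases h6 : i = 1 ∧ x = 3 ∧ y = 6
  · obtain ⟨rfl, rfl, rfl⟩ := h6; simp (config := { decide := true }) [bb16, z0, z1]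
  by_cases h7 : i = 2 ∧ x = 0 ∧ y = 5
  · obtain ⟨rfl, rfl, rfl⟩ := h7; simp (config := { decide := true }) [bb16, z0, z1]
  by_cases h8 : i = 2 ∧ x = 2 ∧ y = 4
  · obtain ⟨rfl, rfl, rfl⟩ := h8; simp (config := { decide := true }) [bb16, z0, z1]
  by_cases h9 : i = 2 ∧ x = 0 ∧ y = 6
  · obtain ⟨rfl, rfl, rfl⟩ := h9; simp (config := { decide := true }) [bb16, z0, z1]
  by_cases h10 : i = 3 ∧ x = 3 ∧ y = 4
  · obtain ⟨rfl, rfl, rfl⟩ := h10; simp (config := { decide := true }) [bb16, z0, z1]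
  by_cases h11 : i = 3 ∧ x = 1 ∧ y = 5
  · obtain ⟨rfl, rfl, rfl⟩ := h11; simp (config := { decide := true }) [bb16, z0, z1]
  by_cases h12 : i = 3 ∧ x = 1 ∧ y = 6
  · obtain ⟨rfl, rfl, rfl⟩ := h12; simp (config := { decide := true }) [bb16, z0, z1]
  simp only [bb16, z0, z1, if_neg h1, if_neg h2, if_neg h3, if_neg h4, if_neg h5, if_neg h6, if_neg h7, if_neg h8, if_neg h9, if_neg h10, if_neg h11, if_neg h12]
  push_cast; ring

lemma hbr (a : ℝ) : br16 a = fun i x y => (c0 i x y : ℝ) + a * (c1 i x y : ℝ) := by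
  funext i x y
  simp only [br16, hbb, c0, c1]
  push_cast; ring

lemma hkd (a i : Fin 7) : kd a i = ((kdZ a i : ℤ) : ℝ) := by
  unfold kd kdZ; split_ifs <;> norm_num

set_option maxHeartbeats 2000000 in
lemma hphi : phi16 = fun i j k => ((phiZ i j k : ℤ) : ℝ) := by
  funext i j k
  simp [phi16, psi7, tripF, Matrix.det_fin_three, hkd, phiZ, tripZ]

lemma expand2 (P0 P1 : Fin 7 → Fin 7 → Fin 7 → ℤ) (a : ℝ) (i x y z : Fin 7) :
    d2 (fun i x y => (P0 i x y : ℝ) + a * (P1 i x y : ℝ))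
      (fun u v => -((P0 i u v : ℝ) + a * (P1 i u v : ℝ))) x y z
      = (F2 P0 P0 i x y z : ℝ)
        + a * ((F2 P0 P1 i x y z : ℝ) + (F2 P1 P0 i x y z : ℝ))
        + a ^ 2 * (F2 P1 P1 i x y z : ℝ) := by
  simp only [d2, F2, sum7_s16, Fin.sum_univ_seven]
  push_cast; ring

lemma expand3 (P0 P1 φZ : Fin 7 → Fin 7 → Fin 7 → ℤ) (a : ℝ) (w x y z : Fin 7) :
    d3 (fun i x y => (P0 i x y : ℝ) + a * (P1 i x y : ℝ))
      (fun i j k => ((φZ i j k : ℤ) : ℝ)) w x y z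
      = (F3 P0 φZ w x y z : ℝ) + a * (F3 P1 φZ w x y z : ℝ) := by
  simp only [d3, F3, sum7_s16, Fin.sum_univ_seven]
  push_cast; ring

lemma key2 : ∀ i x y z : Fin 7, F2 c0 c0 i x y z = 0 ∧
    F2 c0 c1 i x y z + F2 c1 c0 i x y z = 0 ∧ F2 c1 c1 i x y z = 0 := by decide

lemma key3 : ∀ w x y z : Fin 7, F3 c0 phiZ w x y z = 0 ∧ F3 c1 phiZ w x y z = 0 := by
  decide
/-- For every `a ∈ ℝ` the structure equations satisfy `d² = 0` (so they define
a Lie algebra) and the G₂-form `φ` is closed on it. -/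
theorem stmt_16 (a : ℝ) :
    (∀ i x y z : Fin 7, d2 (br16 a) (fun u v => -(br16 a i u v)) x y z = 0) ∧
    (∀ w x y z : Fin 7, d3 (br16 a) phi16 w x y z = 0) := by
  constructor
  · intro i x y z
    simp only [hbr]
    rw [expand2 c0 c1 a i x y z]
    have h := key2 i x y z
    rw [h.1, h.2.2]
    have hm : ((F2 c0 c1 i x y z : ℝ) + (F2 c1 c0 i x y z : ℝ)) = 0 := by
      exact_mod_cast congrArg (Int.cast : ℤ → ℝ) h.2.1
    rw [hm]; ring
  · intro w x y z
    simp only [hbr, hphi]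
    rw [expand3 c0 c1 phiZ a w x y z]
    have h := key3 w x y z
    rw [h.1, h.2]; norm_num
end
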